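/- Let V = V₁ ⊕ V₂ be an orthogonal decomposition of a real inner product space, with dim V₁ = n₁ ≥ 1, dim V₂ = n₂ ≥ 1, n₁ + n₂ ≥ 3. Let ω₁ be the volume form of V₁ (pulled back to V) and ω₂ the volume form of V₂ (pulled back to V), and let λ, μ ∈ ℝ with λ ≠ 0 and μ ≠ 0, and suppose n₁ = n₂ = k. Then for any vector X ∈ V whose components X₁ ∈ V₁ and X₂ ∈ V₂ are both nonzero, X♭ ∧ (λω₁ + μω₂) ≠ 0. -/

import Mathlib

open scoped RealInnerProductSpace
noncomputable section

variable {V : Type*} [NormedAddCommGroup V] [InnerProductSpace ℝ V]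

/-- wedge product of real-valued alternating forms (determinant convention). -/
noncomputable def wedge {k l : ℕ} (α : V [⋀^Fin k]→ₗ[ℝ] ℝ) (β : V [⋀^Fin l]→ₗ[ℝ] ℝ) :
    V [⋀^Fin (k + l)]→ₗ[ℝ] ℝ :=
  ((TensorProduct.lid ℝ ℝ).toLinearMap.compAlternatingMap (α.domCoprod β)).domDomCongr
    finSumFinEquiv

/-- a covector as a 1-form -/
noncomputable def oneForm (τ : V →ₗ[ℝ] ℝ) : V [⋀^Fin 1]→ₗ[ℝ] ℝ :=
  AlternatingMap.ofSubsingleton ℝ V ℝ 0 τ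

/-- musical isomorphism ♭ -/
noncomputable def flat (X : V) : V →ₗ[ℝ] ℝ := (innerSL ℝ X).toLinearMap

/-- musical isomorphism ♯ -/
noncomputable def sharp [FiniteDimensional ℝ V] (τ : V →ₗ[ℝ] ℝ) : V :=
  (InnerProductSpace.toDual ℝ V).symm (LinearMap.toContinuousLinearMap τ)

/-- interior product, sending a k-form to a (k-1)-form (zero for k = 0). -/
noncomputable def iprod : ∀ {m : ℕ}, V → (V [⋀^Fin m]→ₗ[ℝ] ℝ) → (V [⋀^Fin (m - 1)]→ₗ[ℝ] ℝ)
  | 0, _, _ => 0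
  | (_ + 1), X, ω => ω.curryLeft X

/-- reindexing a form along an equality of degrees. -/
noncomputable def fcast {a b : ℕ} (h : a = b) (ω : V [⋀^Fin a]→ₗ[ℝ] ℝ) :
    V [⋀^Fin b]→ₗ[ℝ] ℝ := ω.domDomCongr (finCongr h)


section Aux

variable {V : Type*} [NormedAddCommGroup V] [InnerProductSpace ℝ V]

lemma proj_lemma [FiniteDimensional ℝ V] {k : ℕ} (W : Submodule ℝ V)
    (ω : V [⋀^Fin k]→ₗ[ℝ] ℝ) (hω : ∀ (v : Fin k → V) (i : Fin k), v i ∈ Wᗮ → ω v = 0)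
    (hω0 : ω ≠ 0) : ∃ e : Fin k → V, (∀ i, e i ∈ W) ∧ ω e ≠ 0 := by
  classical
  by_contra h
  push_neg at h
  apply hω0
  ext v
  have key : ∀ s : Finset (Fin k),
      ω v = ω (fun i => if i ∈ s then (W.orthogonalProjection (v i) : V) else v i) := by
    intro s
    induction s using Finset.induction_on with
    | empty => simp
    | insert a s ha ih =>
      rw [ih]
      set g : Fin k → V := fun i => if i ∈ s then (W.orthogonalProjection (v i) : V) else v i
        with hg
      have h1 : (fun i => if i ∈ insert a s then (W.orthogonalProjection (v i) : V) else v i)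
          = Function.update g a (W.orthogonalProjection (v a) : V) := by
        funext i
        by_cases hi : i = a
        · subst hi; simp [Function.update, hg, ha]
        · simp [Function.update, hi, hg, Finset.mem_insert]
      have h2 : g = Function.update g a (v a) := by
        funext i
        by_cases hi : i = a
        · subst hi; simp [hg, ha, Function.update]
        · simp [Function.update, hi]
      rw [h1]
      have hsum : (W.orthogonalProjection (v a) : V)
          + (v a - W.orthogonalProjection (v a)) = v a := by abel
      have h4 : ω (Function.update g a (v a - W.orthogonalProjection (v a))) = 0 := by
        refine hω _ a ?_
        simp only [Function.update_self]
        exact W.sub_starProjection_mem_orthogonal _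
      calc ω g = ω (Function.update g a (v a)) := by rw [← h2]
        _ = ω (Function.update g a (W.orthogonalProjection (v a) : V))
            + ω (Function.update g a (v a - W.orthogonalProjection (v a))) := by
              rw [← ω.map_update_add, hsum]
        _ = ω (Function.update g a (W.orthogonalProjection (v a) : V)) := by rw [h4, add_zero]
  rw [key Finset.univ]
  refine h _ fun i => ?_
  simp only [Finset.mem_univ, if_true]
  exact (W.orthogonalProjection (v i)).2

end Aux

section Aux2

lemma mk_eq_one {k : ℕ} (π : Equiv.Perm (Fin 1 ⊕ Fin k)) (hπ : π (Sum.inl 0) = Sum.inl 0) :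
    (Quotient.mk'' π : Equiv.Perm.ModSumCongr (Fin 1) (Fin k)) = Quotient.mk'' 1 := by
  have h1 : ∀ i : Fin k, ∃ j, π (Sum.inr i) = Sum.inr j := by
    intro i
    rcases hpi : π (Sum.inr i) with a | j
    · exfalso
      have ha : a = 0 := Subsingleton.elim _ _
      subst ha
      exact absurd (π.injective (hpi.trans hπ.symm)) (by simp)
    · exact ⟨j, rfl⟩
  choose g hg using h1
  have hginj : Function.Injective g := by
    intro i j hij
    have := π.injective (show π (Sum.inr i) = π (Sum.inr j) by rw [hg, hg, hij])
    simpa using this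
  let sr : Equiv.Perm (Fin k) := Equiv.ofBijective g (Finite.injective_iff_bijective.mp hginj)
  have hπeq : π = Equiv.Perm.sumCongrHom (Fin 1) (Fin k) (1, sr) := by
    ext x
    rcases x with a | i
    · have ha : a = 0 := Subsingleton.elim _ _
      subst ha
      simpa using hπ
    · simpa [sr, Equiv.ofBijective, Equiv.Perm.sumCongrHom] using hg i
  symm
  refine Quotient.sound' (QuotientGroup.leftRel_apply.mpr ?_)
  simp only [inv_one, one_mul]
  exact ⟨(1, sr), hπeq.symm⟩

end Aux2

/-- for an orthogonal decomposition `V = W ⊕ Wᗮ` with both factors of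
dimension `k` and `2k ≥ 3`, volume forms `ω₁, ω₂` of the factors (pulled back to `V`),
`λ, μ ≠ 0`, and a vector `X = X₁ + X₂` with both components nonzero, one has
`X♭ ∧ (λω₁ + μω₂) ≠ 0`. -/
theorem stmt_11 {V : Type*} [NormedAddCommGroup V] [InnerProductSpace ℝ V]
    [FiniteDimensional ℝ V] (k : ℕ) (hk : 1 ≤ k) (hk3 : 3 ≤ 2 * k)
    (W : Submodule ℝ V) (hW : Module.finrank ℝ W = k) (hW' : Module.finrank ℝ Wᗮ = k)
    (ω₁ ω₂ : V [⋀^Fin k]→ₗ[ℝ] ℝ) (hω₁0 : ω₁ ≠ 0) (hω₂0 : ω₂ ≠ 0)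
    (hω₁ : ∀ (v : Fin k → V) (i : Fin k), v i ∈ Wᗮ → ω₁ v = 0)
    (hω₂ : ∀ (v : Fin k → V) (i : Fin k), v i ∈ W → ω₂ v = 0)
    (lam mu : ℝ) (hlam : lam ≠ 0) (hmu : mu ≠ 0)
    (X₁ X₂ : V) (hX₁ : X₁ ∈ W) (hX₂ : X₂ ∈ Wᗮ) (hX₁0 : X₁ ≠ 0) (hX₂0 : X₂ ≠ 0) :
    wedge (oneForm (flat (X₁ + X₂))) (lam • ω₁ + mu • ω₂) ≠ 0 := by
  classical
  have hk2 : 2 ≤ k := by omega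
  obtain ⟨e, heW, he0⟩ := proj_lemma W ω₁ hω₁ hω₁0
  set τ : V →ₗ[ℝ] ℝ := flat (X₁ + X₂) with hτ
  set β : V [⋀^Fin k]→ₗ[ℝ] ℝ := lam • ω₁ + mu • ω₂ with hβ
  set w : Fin 1 ⊕ Fin k → V := Sum.elim (fun _ => X₂) e with hw
  set v : Fin (1 + k) → V := fun i => w (finSumFinEquiv.symm i) with hv
  -- the evaluation
  have hval : wedge (oneForm τ) β v = τ X₂ * β e := by
    rw [wedge, AlternatingMap.domDomCongr_apply]
    have hcomp : (v ∘ finSumFinEquiv) = w := by funext x; simp [hv]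
    rw [hcomp, LinearMap.compAlternatingMap_apply, AlternatingMap.domCoprod_apply,
      MultilinearMap.sum_apply, map_sum]
    have hsingle : ∀ σ : Equiv.Perm.ModSumCongr (Fin 1) (Fin k),
        σ ≠ (Quotient.mk'' 1 : Equiv.Perm.ModSumCongr (Fin 1) (Fin k)) →
        (TensorProduct.lid ℝ ℝ).toLinearMap ((AlternatingMap.domCoprod.summand (oneForm τ) β σ) w) = 0 := by
      intro σ hσ
      induction σ using Quotient.inductionOn' with
      | h π =>
        have hπ : π (Sum.inl 0) ≠ Sum.inl 0 := fun h => hσ (mk_eq_one π h)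
        obtain ⟨i₀, hi₀⟩ : ∃ i₀ : Fin k, π (Sum.inr i₀) = Sum.inl 0 := by
          obtain ⟨x, hx⟩ := π.surjective (Sum.inl 0)
          rcases x with a | i
          · have ha : a = 0 := Subsingleton.elim _ _
            subst ha; exact absurd hx hπ
          · exact ⟨i, hx⟩
        have hβ0 : β (fun i => w (π (Sum.inr i))) = 0 := by
          obtain ⟨i₁, hi₁⟩ : ∃ i₁ : Fin k, i₁ ≠ i₀ := by
            exact Fintype.exists_ne_of_one_lt_card (by simp; omega) i₀
          obtain ⟨j₁, hj₁⟩ : ∃ j₁, π (Sum.inr i₁) = Sum.inr j₁ := by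
            rcases hx : π (Sum.inr i₁) with a | j
            · have ha : a = 0 := Subsingleton.elim _ _
              subst ha
              exact absurd (π.injective (hx.trans hi₀.symm)) (by simpa using hi₁)
            · exact ⟨j, rfl⟩
          rw [hβ]
          simp only [AlternatingMap.add_apply, AlternatingMap.smul_apply, smul_eq_mul]
          have h1 : ω₁ (fun i => w (π (Sum.inr i))) = 0 := by
            refine hω₁ _ i₀ ?_
            rw [hi₀]; simpa [hw] using hX₂
          have h2 : ω₂ (fun i => w (π (Sum.inr i))) = 0 := by
            refine hω₂ _ i₁ ?_
            rw [hj₁]; simpa [hw] using heW j₁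
          rw [h1, h2]; ring
        rw [AlternatingMap.domCoprod.summand_mk'']
        simp only [MultilinearMap.smul_apply, MultilinearMap.domDomCongr_apply,
          MultilinearMap.domCoprod_apply, AlternatingMap.coe_multilinearMap,
          Function.comp]
        rw [hβ0, TensorProduct.tmul_zero, smul_zero, map_zero]
    rw [Fintype.sum_eq_single _ hsingle,
      AlternatingMap.domCoprod.summand_mk'']
    simp only [map_one, one_smul, MultilinearMap.domDomCongr_apply,
      MultilinearMap.domCoprod_apply, AlternatingMap.coe_multilinearMap,
      Equiv.Perm.coe_one, Function.comp_id, TensorProduct.lid_tmul, smul_eq_mul]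
    have e1 : ((oneForm τ) fun i => w (id (Sum.inl i))) = τ X₂ := by
      simp [oneForm, hw]
    have e2 : (β fun i => w (id (Sum.inr i))) = β e := rfl
    rw [e1, e2, LinearEquiv.coe_coe, TensorProduct.lid_tmul, smul_eq_mul]
  intro hcontra
  have h0 : wedge (oneForm τ) β v = 0 := by rw [hβ, hτ] at *; rw [hcontra]; rfl
  rw [hval] at h0
  -- now derive contradiction
  have hτX₂ : τ X₂ = ‖X₂‖ ^ 2 := by
    rw [hτ]
    simp only [flat, ContinuousLinearMap.coe_coe, innerSL_apply_apply]
    rw [inner_add_left]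
    rw [(Submodule.mem_orthogonal W X₂).mp hX₂ X₁ hX₁]
    rw [real_inner_self_eq_norm_sq]
    ring
  have hβe : β e = lam * ω₁ e := by
    rw [hβ]
    simp only [AlternatingMap.add_apply, AlternatingMap.smul_apply, smul_eq_mul]
    rw [hω₂ e ⟨0, by omega⟩ (heW _)]
    ring
  rw [hτX₂, hβe] at h0
  have : ‖X₂‖ ≠ 0 := norm_ne_zero_iff.mpr hX₂0
  rcases mul_eq_zero.mp h0 with h | h
  · exact pow_ne_zero 2 this h
  · rcases mul_eq_zero.mp h with h' | h'
    · exact hlam h'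
    · exact he0 h'
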